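/- Let (M,Q,l) be subextremal Reissner–Nordström–AdS parameters with two positive roots 0 < r_− < r_+ of Δ, and let α < 9/4. Then there exist ω₀ > 0, ℓ₀ ∈ ℕ, radii r₀, r₁ with r_+ < r₀ < r₁, and a constant c > 0 (all depending only on M, Q, l, α) such that for every integer ℓ ≥ ℓ₀ and every ω ∈ ℝ with |ω| ≤ 2ω₀ the following hold: (i) V_ℓ(r) − ω² + h(r)/(4l²) ≥ c·( ℓ(ℓ+1) + h(r) ) for all r ≥ r₀; and (ii) V_ℓ(r) − ω² ≥ 0 for all r ∈ [r₀, r₁]. -/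

import Mathlib

open Real

/-- The metric coefficient `h(r) = Δ(r)/r² = 1 − 2M/r + Q²/r² + r²/l²`. -/
noncomputable def hRNAdS (M Q l : ℝ) : ℝ → ℝ :=
  fun r => 1 - 2 * M / r + Q ^ 2 / r ^ 2 + r ^ 2 / l ^ 2

/-- The potential `V_ℓ(r) = h(r)·( h'(r)/r + ℓ(ℓ+1)/r² − α/l² )` of the radial o.d.e. -/
noncomputable def VRNAdS (M Q l α : ℝ) (ℓ : ℕ) : ℝ → ℝ :=
  fun r => hRNAdS M Q l r *
    (deriv (hRNAdS M Q l) r / r + ((ℓ : ℝ) * ((ℓ : ℝ) + 1)) / r ^ 2 - α / l ^ 2)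

lemma deriv_hRNAdS (M Q l : ℝ) (hl : l ≠ 0) (r : ℝ) (hr : r ≠ 0) :
    deriv (hRNAdS M Q l) r = 2*M/r^2 - 2*Q^2/r^3 + 2*r/l^2 := by
  have funeq : hRNAdS M Q l = fun x : ℝ => 1 - 2*M*x⁻¹ + Q^2*(x^2)⁻¹ + x^2/l^2 := by
    funext x; simp only [hRNAdS]; ring
  rw [funeq]
  have hp2 : HasDerivAt (fun x : ℝ => x^2) (2*r) r := by
    simpa using hasDerivAt_pow 2 r
  have hinv2 : HasDerivAt (fun x : ℝ => (x^2)⁻¹) (-(2*r) / (r^2)^2) r :=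
    hp2.inv (pow_ne_zero 2 hr)
  have h1 := (hasDerivAt_inv hr).const_mul (2*M)
  have H := ((h1.const_sub 1).add (hinv2.const_mul (Q^2))).add (hp2.div_const (l^2))
  rw [show deriv (fun x : ℝ => 1 - 2*M*x⁻¹ + Q^2*(x^2)⁻¹ + x^2/l^2) r = _ from H.deriv]
  field_simp
  ring

lemma hRNAdS_lb (M Q l : ℝ) (hM : 0 < M) (hl : 0 < l) (r : ℝ)
    (hr1 : 1 ≤ r) (hrl : 4*M*l^2 ≤ r) :
    r^2/(2*l^2) ≤ hRNAdS M Q l r := by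
  have hr0 : (0:ℝ) < r := by linarith
  have h1 : 2*M/r ≤ r^2/(2*l^2) := by
    rw [div_le_div_iff₀ hr0 (by positivity)]
    nlinarith [mul_nonneg (mul_nonneg hr0.le (sub_nonneg.2 hr1)) (by linarith : (0:ℝ) ≤ r+1)]
  have h2 : (0:ℝ) ≤ Q^2/r^2 := by positivity
  have h3 : r^2/l^2 = r^2/(2*l^2) + r^2/(2*l^2) := by ring
  simp only [hRNAdS]
  linarith

lemma main_pt (M Q l α : ℝ) (hM : 0 < M) (hl : 0 < l) (hα : α < 9/4)
    (L : ℝ) (hL : 1 ≤ L) (r : ℝ) (hr1 : 1 ≤ r) (hrl : 4*M*l^2 ≤ r) (hrQ : Q^2 ≤ M*r)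
    (ω : ℝ) (hω : ω^2 ≤ 1/(4*l^2)) :
    min (1/(4*l^2)) ((9/4-α)/l^2) * (L + hRNAdS M Q l r) ≤
      hRNAdS M Q l r * ((2*M/r^2 - 2*Q^2/r^3 + 2*r/l^2)/r + L/r^2 - α/l^2)
        - ω^2 + hRNAdS M Q l r/(4*l^2) := by
  have hr0 : (0:ℝ) < r := by linarith
  set h := hRNAdS M Q l r with hdef
  have hh : r^2/(2*l^2) ≤ h := hRNAdS_lb M Q l hM hl r hr1 hrl
  have hh0 : 0 < h := lt_of_lt_of_le (by positivity) hh
  set c := min (1/(4*l^2)) ((9/4-α)/l^2) with hc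
  set ε := (9/4-α)/l^2 with hε
  -- bound on h/r² term
  have hr2 : (1:ℝ)/(2*l^2) ≤ h/r^2 := by
    have t0 : r^2/(2*l^2)/r^2 ≤ h/r^2 := by gcongr
    have : r^2/(2*l^2)/r^2 = 1/(2*l^2) := by field_simp
    linarith
  have t1 : L/(2*l^2) ≤ h * (L/r^2) := by
    have := mul_le_mul_of_nonneg_left hr2 (by linarith : (0:ℝ) ≤ L)
    calc L/(2*l^2) = L * (1/(2*l^2)) := by ring
    _ ≤ L * (h/r^2) := this
    _ = h * (L/r^2) := by ring
  -- bound on the B term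
  have key : (0:ℝ) ≤ 2*M/r^3 - 2*Q^2/r^4 := by
    rw [sub_nonneg, div_le_div_iff₀ (by positivity) (by positivity)]
    nlinarith [pow_pos hr0 3]
  have expand : (2*M/r^2 - 2*Q^2/r^3 + 2*r/l^2)/r = 2*M/r^3 - 2*Q^2/r^4 + 2/l^2 := by
    field_simp
  have tB : ε ≤ (2*M/r^2 - 2*Q^2/r^3 + 2*r/l^2)/r - α/l^2 + 1/(4*l^2) := by
    rw [expand]
    have : ε = 2/l^2 - α/l^2 + 1/(4*l^2) := by rw [hε]; ring
    linarith
  have t2 : h * ε ≤ h * ((2*M/r^2 - 2*Q^2/r^3 + 2*r/l^2)/r - α/l^2 + 1/(4*l^2)) :=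
    mul_le_mul_of_nonneg_left tB hh0.le
  -- ω² bound
  have tω : ω^2 ≤ L/(4*l^2) := by
    have h0 : (0:ℝ) ≤ (L-1)/(4*l^2) := div_nonneg (by linarith) (by positivity)
    have h1 : L/(4*l^2) - 1/(4*l^2) = (L-1)/(4*l^2) := by ring
    linarith
  -- c bounds
  have hεpos : 0 < ε := by rw [hε]; exact div_pos (by linarith) (by positivity)
  have c1 : c ≤ 1/(4*l^2) := min_le_left _ _
  have c2 : c ≤ ε := min_le_right _ _
  have c0 : 0 < c := lt_min (by positivity) hεpos
  have t3 : c * L ≤ L/(4*l^2) := by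
    calc c * L ≤ (1/(4*l^2)) * L := mul_le_mul_of_nonneg_right c1 (by linarith)
    _ = L/(4*l^2) := by ring
  have t4 : c * h ≤ ε * h := mul_le_mul_of_nonneg_right c2 hh0.le
  have rngeq : h * ((2*M/r^2 - 2*Q^2/r^3 + 2*r/l^2)/r + L/r^2 - α/l^2) - ω^2 + h/(4*l^2)
      = h * (L/r^2) + h * ((2*M/r^2 - 2*Q^2/r^3 + 2*r/l^2)/r - α/l^2 + 1/(4*l^2)) - ω^2 := by
    ring
  rw [rngeq]
  have idh : h * ε = ε * h := by ring
  have idL : L/(2*l^2) = L/(4*l^2) + L/(4*l^2) := by ring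
  have idc : c*(L+h) = c*L + c*h := by ring
  linarith [t1, t2, tω, t3, t4, idh, idL, idc]

set_option maxHeartbeats 1000000 in
theorem stmt5 (M Q l α : ℝ) (hM : 0 < M) (hl : 0 < l) (hα : α < 9 / 4)
    (rm rp : ℝ) (hrm : 0 < rm) (hrmrp : rm < rp)
    (hΔm : rm ^ 2 - 2 * M * rm + rm ^ 4 / l ^ 2 + Q ^ 2 = 0)
    (hΔp : rp ^ 2 - 2 * M * rp + rp ^ 4 / l ^ 2 + Q ^ 2 = 0)
    (hroots : ∀ r : ℝ, 0 < r →
      r ^ 2 - 2 * M * r + r ^ 4 / l ^ 2 + Q ^ 2 = 0 → r = rm ∨ r = rp) :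
    ∃ ω₀ : ℝ, 0 < ω₀ ∧ ∃ ℓ₀ : ℕ, ∃ r₀ r₁ : ℝ, rp < r₀ ∧ r₀ < r₁ ∧
      ∃ c : ℝ, 0 < c ∧
        ∀ ℓ : ℕ, ℓ₀ ≤ ℓ → ∀ ω : ℝ, |ω| ≤ 2 * ω₀ →
          (∀ r : ℝ, r₀ ≤ r →
            c * ((ℓ : ℝ) * ((ℓ : ℝ) + 1) + hRNAdS M Q l r) ≤
              VRNAdS M Q l α ℓ r - ω ^ 2 + hRNAdS M Q l r / (4 * l ^ 2)) ∧
          (∀ r ∈ Set.Icc r₀ r₁, 0 ≤ VRNAdS M Q l α ℓ r - ω ^ 2) := by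
  set r₀ : ℝ := rp + 1 + 4*M*l^2 + Q^2/M with hr₀def
  set r₁ : ℝ := r₀ + 1 with hr₁def
  set c : ℝ := min (1/(4*l^2)) ((9/4-α)/l^2) with hcdef
  have hεpos : (0:ℝ) < (9/4-α)/l^2 := div_pos (by linarith) (by positivity)
  have c0 : 0 < c := lt_min (by positivity) hεpos
  set H : ℝ := 1 + Q^2 + r₁^2/l^2 with hHdef
  set K : ℝ := H/(4*l^2*c) with hKdef
  set ℓ₀ : ℕ := max 1 ⌈K⌉₊ with hℓ₀def
  have hq : (0:ℝ) ≤ Q^2/M := by positivity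
  have h4M : (0:ℝ) < 4*M*l^2 := by positivity
  have hr₀rp : rp < r₀ := by rw [hr₀def]; linarith
  have hr₀1 : (1:ℝ) ≤ r₀ := by rw [hr₀def]; linarith
  refine ⟨1/(4*l), by positivity, ℓ₀, r₀, r₁, hr₀rp, by rw [hr₁def]; linarith, c, c0, ?_⟩
  intro ℓ hℓ ω hω
  have hℓ1 : (1:ℝ) ≤ (ℓ:ℝ) := by
    have : 1 ≤ ℓ := le_trans (le_max_left _ _) hℓ
    exact_mod_cast this
  set L : ℝ := (ℓ:ℝ) * ((ℓ:ℝ) + 1) with hLdef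
  have hL1 : 1 ≤ L := by nlinarith
  have hωsq : ω^2 ≤ 1/(4*l^2) := by
    have h1 : ω^2 ≤ (2*(1/(4*l)))^2 := by
      rw [← sq_abs]
      exact pow_le_pow_left₀ (abs_nonneg ω) hω 2
    have h2 : (2*(1/(4*l)))^2 = 1/(4*l^2) := by field_simp; ring
    linarith
  have main : ∀ r : ℝ, r₀ ≤ r →
      c * (L + hRNAdS M Q l r) ≤
        VRNAdS M Q l α ℓ r - ω^2 + hRNAdS M Q l r / (4*l^2) := by
    intro r hr
    have hr1 : (1:ℝ) ≤ r := le_trans hr₀1 hr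
    have hr0 : (0:ℝ) < r := by linarith
    have hrl : 4*M*l^2 ≤ r := by rw [hr₀def] at hr; linarith
    have hrQ : Q^2 ≤ M*r := by
      have : Q^2/M ≤ r := by rw [hr₀def] at hr; linarith
      calc Q^2 = M * (Q^2/M) := by field_simp
      _ ≤ M * r := mul_le_mul_of_nonneg_left this hM.le
    have hd := deriv_hRNAdS M Q l hl.ne' r hr0.ne'
    have := main_pt M Q l α hM hl (by linarith) L hL1 r hr1 hrl hrQ ω hωsq
    simp only [VRNAdS, hd]
    convert this using 2
  refine ⟨main, ?_⟩
  intro r hrmem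
  obtain ⟨hrlo, hrhi⟩ := hrmem
  have hr1 : (1:ℝ) ≤ r := le_trans hr₀1 hrlo
  have hr0 : (0:ℝ) < r := by linarith
  -- h ≤ H on [r₀, r₁]
  have hhub : hRNAdS M Q l r ≤ H := by
    have e1 : 2*M/r ≥ 0 := by positivity
    have e2 : Q^2/r^2 ≤ Q^2 := by
      have h2 : (1:ℝ) ≤ r^2 := by nlinarith
      exact div_le_self (by positivity) h2
    have e3 : r^2/l^2 ≤ r₁^2/l^2 := by
      gcongr
    simp only [hRNAdS, hHdef]
    linarith
  have hh0 : 0 < hRNAdS M Q l r := by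
    have hrl : 4*M*l^2 ≤ r := by rw [hr₀def] at hrlo; linarith
    have := hRNAdS_lb M Q l hM hl r hr1 hrl
    have : (0:ℝ) < r^2/(2*l^2) := by positivity
    linarith [hRNAdS_lb M Q l hM hl r hr1 hrl]
  -- c*L ≥ H/(4l²)
  have hℓK : K ≤ L := by
    have h1 : (⌈K⌉₊:ℝ) ≤ (ℓ₀:ℝ) := by exact_mod_cast le_max_right 1 ⌈K⌉₊
    have h2 : (ℓ₀:ℝ) ≤ (ℓ:ℝ) := by exact_mod_cast hℓ
    have h3 : K ≤ (⌈K⌉₊:ℝ) := Nat.le_ceil K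
    nlinarith
  have hcL : H/(4*l^2) ≤ c * L := by
    have : c * K = H/(4*l^2) := by
      rw [hKdef]; field_simp [c0.ne']
    nlinarith [mul_le_mul_of_nonneg_left hℓK c0.le]
  have hmain := main r hrlo
  have hch : 0 ≤ c * hRNAdS M Q l r := mul_nonneg c0.le hh0.le
  have hhH : hRNAdS M Q l r / (4*l^2) ≤ H/(4*l^2) := by gcongr
  have goal4l : hRNAdS M Q l r / (4 * l ^ 2) = hRNAdS M Q l r / (4*l^2) := by ring
  nlinarith [hmain, hcL, hch, hhH]
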